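/- Let H = (V, E) be a hypergraph with a finite relation R_F over each hyperedge F ∈ E, let V_b be a proper subset of V, let u be a fractional edge cover of V, and let α be its slack. Then for every real T > 0, the set of tuples a over V_b such that the number of tuples t in the join ⋈_{F∈E} R_F with t[V_b] = a exceeds T is finite and has cardinality at most (∏_{F ∈ E} |R_F|^{u_F}) / T^α. -/

import Mathlib

open Finset Real

/-- n-fold Hölder: if weights sum to at least 1, then
`∑ b ∏ i (g i b)^(u i) ≤ ∏ i (∑ b g i b)^(u i)`. -/
lemma holder_n {ι β : Type*} (A : Finset ι) (B : Finset β)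
    (u : ι → ℝ) (hu : ∀ i ∈ A, 0 < u i) (hsum : 1 ≤ ∑ i ∈ A, u i)
    (g : ι → β → ℝ) (hg : ∀ i ∈ A, ∀ b ∈ B, 0 ≤ g i b) :
    ∑ b ∈ B, ∏ i ∈ A, g i b ^ u i ≤ ∏ i ∈ A, (∑ b ∈ B, g i b) ^ u i := by
  by_cases hz : ∃ i ∈ A, ∑ b ∈ B, g i b = 0
  · obtain ⟨i, hiA, hi⟩ := hz
    have hgz : ∀ b ∈ B, g i b = 0 := fun b hb =>
      (Finset.sum_eq_zero_iff_of_nonneg (fun b hb => hg i hiA b hb)).1 hi b hb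
    have hL : ∑ b ∈ B, ∏ j ∈ A, g j b ^ u j = 0 := by
      refine Finset.sum_eq_zero fun b hb => ?_
      refine Finset.prod_eq_zero hiA ?_
      rw [hgz b hb]
      exact Real.zero_rpow (hu i hiA).ne'
    rw [hL]
    exact Finset.prod_nonneg fun j hj => Real.rpow_nonneg
      (Finset.sum_nonneg fun b hb => hg j hj b hb) _
  · push_neg at hz
    set S : ι → ℝ := fun i => ∑ b ∈ B, g i b with hS
    have hSpos : ∀ i ∈ A, 0 < S i := fun i hi =>
      lt_of_le_of_ne (Finset.sum_nonneg fun b hb => hg i hi b hb) (Ne.symm (hz i hi))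
    set s := ∑ i ∈ A, u i with hs
    have hspos : 0 < s := lt_of_lt_of_le one_pos hsum
    have key : ∑ b ∈ B, ∏ i ∈ A, (g i b / S i) ^ u i ≤ 1 := by
      have hle : ∀ b ∈ B, ∏ i ∈ A, (g i b / S i) ^ u i
          ≤ ∑ i ∈ A, (u i / s) * (g i b / S i) := by
        intro b hb
        have hh0 : ∀ i ∈ A, 0 ≤ g i b / S i := fun i hi =>
          div_nonneg (hg i hi b hb) (hSpos i hi).le
        have hh1 : ∀ i ∈ A, g i b / S i ≤ 1 := by
          intro i hi
          rw [div_le_one (hSpos i hi)]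
          exact Finset.single_le_sum (fun c hc => hg i hi c hc) hb
        have h1 : ∏ i ∈ A, (g i b / S i) ^ u i
            = (∏ i ∈ A, (g i b / S i) ^ (u i / s)) ^ s := by
          rw [← Real.finset_prod_rpow A _ (fun i hi => Real.rpow_nonneg (hh0 i hi) _) s]
          refine Finset.prod_congr rfl fun i hi => ?_
          rw [← Real.rpow_mul (hh0 i hi), div_mul_cancel₀ _ hspos.ne']
        have h2 : ∏ i ∈ A, (g i b / S i) ^ (u i / s)
            ≤ ∑ i ∈ A, (u i / s) * (g i b / S i) :=
          Real.geom_mean_le_arith_mean_weighted A _ _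
            (fun i hi => div_nonneg (hu i hi).le hspos.le)
            (by rw [← Finset.sum_div, ← hs, div_self hspos.ne']) hh0
        have hM0 : 0 ≤ ∑ i ∈ A, (u i / s) * (g i b / S i) :=
          Finset.sum_nonneg fun i hi =>
            mul_nonneg (div_nonneg (hu i hi).le hspos.le) (hh0 i hi)
        have hM1 : ∑ i ∈ A, (u i / s) * (g i b / S i) ≤ 1 := by
          calc ∑ i ∈ A, (u i / s) * (g i b / S i) ≤ ∑ i ∈ A, (u i / s) * 1 :=
                Finset.sum_le_sum fun i hi => mul_le_mul_of_nonneg_left (hh1 i hi)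
                  (div_nonneg (hu i hi).le hspos.le)
            _ = 1 := by
                simp only [mul_one]
                rw [← Finset.sum_div, ← hs, div_self hspos.ne']
        have hQ0 : 0 ≤ ∏ i ∈ A, (g i b / S i) ^ (u i / s) :=
          Finset.prod_nonneg fun i hi => Real.rpow_nonneg (hh0 i hi) _
        rw [h1]
        calc (∏ i ∈ A, (g i b / S i) ^ (u i / s)) ^ s
            ≤ (∑ i ∈ A, (u i / s) * (g i b / S i)) ^ s :=
              Real.rpow_le_rpow hQ0 h2 hspos.le
          _ ≤ ∑ i ∈ A, (u i / s) * (g i b / S i) := by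
              rcases eq_or_lt_of_le hM0 with h | h
              · rw [← h, Real.zero_rpow hspos.ne']
              · calc (∑ i ∈ A, (u i / s) * (g i b / S i)) ^ s
                    ≤ (∑ i ∈ A, (u i / s) * (g i b / S i)) ^ (1:ℝ) :=
                      Real.rpow_le_rpow_of_exponent_ge h hM1 hsum
                  _ = _ := Real.rpow_one _
      calc ∑ b ∈ B, ∏ i ∈ A, (g i b / S i) ^ u i
          ≤ ∑ b ∈ B, ∑ i ∈ A, (u i / s) * (g i b / S i) :=
            Finset.sum_le_sum hle
        _ = ∑ i ∈ A, (u i / s) * (∑ b ∈ B, g i b / S i) := by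
            rw [Finset.sum_comm]
            exact Finset.sum_congr rfl fun i _ => (Finset.mul_sum _ _ _).symm
        _ = 1 := by
            have : ∀ i ∈ A, (u i / s) * (∑ b ∈ B, g i b / S i) = u i / s := by
              intro i hi
              rw [← Finset.sum_div]
              have : (∑ b ∈ B, g i b) / S i = 1 := div_self (hSpos i hi).ne'
              rw [this, mul_one]
            rw [Finset.sum_congr rfl this, ← Finset.sum_div, ← hs, div_self hspos.ne']
    have expand : ∀ b ∈ B, ∏ i ∈ A, g i b ^ u i
        = (∏ i ∈ A, (g i b / S i) ^ u i) * ∏ i ∈ A, S i ^ u i := by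
      intro b hb
      rw [← Finset.prod_mul_distrib]
      refine Finset.prod_congr rfl fun i hi => ?_
      rw [← Real.mul_rpow (div_nonneg (hg i hi b hb) (hSpos i hi).le) (hSpos i hi).le,
        div_mul_cancel₀ _ (hSpos i hi).ne']
    calc ∑ b ∈ B, ∏ i ∈ A, g i b ^ u i
        = (∑ b ∈ B, ∏ i ∈ A, (g i b / S i) ^ u i) * ∏ i ∈ A, S i ^ u i := by
          rw [Finset.sum_mul]
          exact Finset.sum_congr rfl expand
      _ ≤ 1 * ∏ i ∈ A, S i ^ u i :=
          mul_le_mul_of_nonneg_right key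
            (Finset.prod_nonneg fun i hi => Real.rpow_nonneg (hSpos i hi).le _)
      _ = ∏ i ∈ A, (∑ b ∈ B, g i b) ^ u i := by rw [one_mul]

section Box

variable {V : Type*} [Fintype V] [DecidableEq V] {D : V → Type*}

/-- The finite grid of tuples whose coordinates in `S` range over `Dfin` and whose
coordinates outside `S` are pinned to the base tuple `t₀`. -/
def pbox (Dfin : ∀ x, Finset (D x)) (t₀ : ∀ x, D x) (S : Finset V) : Finset (∀ x, D x) :=
  Fintype.piFinset (fun x => if x ∈ S then Dfin x else {t₀ x})

lemma mem_pbox {Dfin : ∀ x, Finset (D x)} {t₀ : ∀ x, D x} {S : Finset V} {t : ∀ x, D x} :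
    t ∈ pbox Dfin t₀ S ↔ (∀ y ∈ S, t y ∈ Dfin y) ∧ ∀ y, y ∉ S → t y = t₀ y := by
  simp only [pbox, Fintype.mem_piFinset]
  constructor
  · intro h
    refine ⟨fun y hy => by simpa [hy] using h y, fun y hy => by simpa [hy] using h y⟩
  · intro h y
    by_cases hy : y ∈ S
    · simpa [hy] using h.1 y hy
    · simpa [hy] using h.2 y hy

lemma pbox_empty (Dfin : ∀ x, Finset (D x)) (t₀ : ∀ x, D x) :
    pbox Dfin t₀ (∅ : Finset V) = {t₀} := by
  ext t
  rw [mem_pbox, Finset.mem_singleton]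
  constructor
  · intro h; funext y; exact h.2 y (Finset.notMem_empty y)
  · intro h; subst h; exact ⟨fun y hy => absurd hy (Finset.notMem_empty y), fun y _ => rfl⟩

lemma pbox_split (Dfin : ∀ x, Finset (D x)) (t₀ : ∀ x, D x) (S : Finset V) {x : V}
    (hx : x ∈ S) (h : (∀ y, D y) → ℝ) :
    ∑ t ∈ pbox Dfin t₀ S, h t
      = ∑ v ∈ Dfin x, ∑ t ∈ pbox Dfin t₀ (S.erase x), h (Function.update t x v) := by
  have step : ∑ t ∈ pbox Dfin t₀ S, h t
      = ∑ p ∈ Dfin x ×ˢ pbox Dfin t₀ (S.erase x), h (Function.update p.2 x p.1) := by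
    refine Finset.sum_nbij' (fun t => (t x, Function.update t x (t₀ x)))
      (fun p => Function.update p.2 x p.1) ?_ ?_ ?_ ?_ ?_
    · intro t ht
      rw [mem_pbox] at ht
      rw [Finset.mem_product]
      refine ⟨ht.1 x hx, ?_⟩
      show Function.update t x (t₀ x) ∈ pbox Dfin t₀ (S.erase x)
      rw [mem_pbox]
      constructor
      · intro y hy
        rw [Finset.mem_erase] at hy
        rw [Function.update_of_ne hy.1]
        exact ht.1 y hy.2
      · intro y hy
        rcases eq_or_ne y x with rfl | hne
        · rw [Function.update_self]
        · rw [Function.update_of_ne hne]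
          exact ht.2 y (fun hyS => hy (Finset.mem_erase.2 ⟨hne, hyS⟩))
    · rintro ⟨v, s⟩ hp
      rw [Finset.mem_product] at hp
      obtain ⟨hv, hs⟩ := hp
      rw [mem_pbox] at hs
      show Function.update s x v ∈ pbox Dfin t₀ S
      rw [mem_pbox]
      constructor
      · intro y hy
        rcases eq_or_ne y x with rfl | hne
        · rw [Function.update_self]; exact hv
        · rw [Function.update_of_ne hne]
          exact hs.1 y (Finset.mem_erase.2 ⟨hne, hy⟩)
      · intro y hy
        have hne : y ≠ x := fun h' => hy (h' ▸ hx)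
        rw [Function.update_of_ne hne]
        exact hs.2 y (fun h' => hy (Finset.mem_of_mem_erase h'))
    · intro t ht
      rw [mem_pbox] at ht
      show Function.update (Function.update t x (t₀ x)) x (t x) = t
      rw [Function.update_idem, Function.update_eq_self]
    · rintro ⟨v, s⟩ hp
      rw [Finset.mem_product] at hp
      obtain ⟨hv, hs⟩ := hp
      rw [mem_pbox] at hs
      show (Function.update s x v x, Function.update (Function.update s x v) x (t₀ x)) = (v, s)
      rw [Function.update_self, Function.update_idem]
      have : t₀ x = s x := (hs.2 x (Finset.notMem_erase x S)).symm
      rw [this, Function.update_eq_self]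
    · intro t ht
      show h t = h (Function.update (Function.update t x (t₀ x)) x (t x))
      rw [Function.update_idem, Function.update_eq_self]
  rw [step, Finset.sum_product]

end Box

/-- Finner's inequality (functional AGM bound) over finite grids. -/
lemma finner {V : Type*} [Fintype V] [DecidableEq V] {D : V → Type*}
    (Dfin : ∀ x, Finset (D x)) (t₀ : ∀ x, D x)
    (E : Finset (Finset V)) (w : Finset V → ℝ) (hw : ∀ F ∈ E, 0 < w F)
    (S : Finset V)
    (hcov : ∀ x ∈ S, 1 ≤ ∑ F ∈ E, if x ∈ F then w F else 0)
    (f : Finset V → (∀ x, D x) → ℝ)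
    (hf0 : ∀ F ∈ E, ∀ t, 0 ≤ f F t)
    (hdep : ∀ F ∈ E, ∀ t t', (∀ y ∈ F, t y = t' y) → f F t = f F t') :
    ∑ t ∈ pbox Dfin t₀ S, ∏ F ∈ E, f F t
      ≤ ∏ F ∈ E, (∑ s ∈ pbox Dfin t₀ (S ∩ F), f F s ^ (w F)⁻¹) ^ w F := by
  obtain ⟨n, hn⟩ : ∃ n, S.card = n := ⟨_, rfl⟩
  induction n generalizing S f with
  | zero =>
    rw [Finset.card_eq_zero] at hn
    subst hn
    have he : ∀ F : Finset V, (∅ : Finset V) ∩ F = ∅ := fun F => Finset.empty_inter F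
    rw [pbox_empty, Finset.sum_singleton]
    refine Finset.prod_le_prod (fun F hF => hf0 F hF t₀) (fun F hF => ?_)
    rw [he F, pbox_empty, Finset.sum_singleton,
      Real.rpow_inv_rpow (hf0 F hF t₀) (hw F hF).ne']
  | succ n ih =>
    have hpos : 0 < S.card := by rw [hn]; exact Nat.succ_pos n
    obtain ⟨x, hx⟩ := Finset.card_pos.1 hpos
    have hcard : (S.erase x).card = n := by
      rw [Finset.card_erase_of_mem hx, hn]; rfl
    set f' : Finset V → (∀ y, D y) → ℝ := fun F t =>
      if x ∈ F then (∑ v ∈ Dfin x, f F (Function.update t x v) ^ (w F)⁻¹) ^ w F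
      else f F t with hf'def
    have hf'0 : ∀ F ∈ E, ∀ t, 0 ≤ f' F t := by
      intro F hF t
      rw [hf'def]
      by_cases hxF : x ∈ F
      · simp only [hxF, if_true]
        exact Real.rpow_nonneg (Finset.sum_nonneg fun v _ =>
          Real.rpow_nonneg (hf0 F hF _) _) _
      · simp only [hxF, if_false]
        exact hf0 F hF t
    have hdep' : ∀ F ∈ E, ∀ t t', (∀ y ∈ F, t y = t' y) → f' F t = f' F t' := by
      intro F hF t t' hag
      rw [hf'def]
      by_cases hxF : x ∈ F
      · simp only [hxF, if_true]
        congr 1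
        refine Finset.sum_congr rfl fun v _ => ?_
        congr 1
        refine hdep F hF _ _ fun y hy => ?_
        rcases eq_or_ne y x with rfl | hne
        · rw [Function.update_self, Function.update_self]
        · rw [Function.update_of_ne hne, Function.update_of_ne hne]
          exact hag y hy
      · simp only [hxF, if_false]
        exact hdep F hF t t' hag
    have hcov' : ∀ y ∈ S.erase x, 1 ≤ ∑ F ∈ E, if y ∈ F then w F else 0 :=
      fun y hy => hcov y (Finset.mem_of_mem_erase hy)
    -- Step B (pointwise Hölder in coordinate x)
    have stepB : ∀ t ∈ pbox Dfin t₀ (S.erase x),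
        ∑ v ∈ Dfin x, ∏ F ∈ E, f F (Function.update t x v) ≤ ∏ F ∈ E, f' F t := by
      intro t ht
      have hsplitprod : ∀ v,
          ∏ F ∈ E, f F (Function.update t x v)
            = (∏ F ∈ E.filter (fun F => x ∈ F), f F (Function.update t x v))
              * ∏ F ∈ E.filter (fun F => ¬ x ∈ F), f F t := by
        intro v
        rw [← Finset.prod_filter_mul_prod_filter_not E (fun F => x ∈ F)]
        congr 1
        refine Finset.prod_congr rfl fun F hF => ?_
        rw [Finset.mem_filter] at hF
        refine hdep F hF.1 _ _ fun y hy => ?_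
        have hne : y ≠ x := fun h' => hF.2 (by rwa [← h'])
        rw [Function.update_of_ne hne]
      have hsum1 : 1 ≤ ∑ F ∈ E.filter (fun F => x ∈ F), w F := by
        have := hcov x hx
        rwa [← Finset.sum_filter] at this
      have hhold := holder_n (E.filter (fun F => x ∈ F)) (Dfin x) w
        (fun F hF => hw F (Finset.mem_of_mem_filter F hF)) hsum1
        (fun F v => f F (Function.update t x v) ^ (w F)⁻¹)
        (fun F hF v _ => Real.rpow_nonneg (hf0 F (Finset.mem_of_mem_filter F hF) _) _)
      have hrw : ∀ v ∈ Dfin x, ∏ F ∈ E.filter (fun F => x ∈ F),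
          (f F (Function.update t x v) ^ (w F)⁻¹) ^ w F
            = ∏ F ∈ E.filter (fun F => x ∈ F), f F (Function.update t x v) := by
        intro v _
        refine Finset.prod_congr rfl fun F hF => ?_
        exact Real.rpow_inv_rpow (hf0 F (Finset.mem_of_mem_filter F hF) _)
          (hw F (Finset.mem_of_mem_filter F hF)).ne'
      calc ∑ v ∈ Dfin x, ∏ F ∈ E, f F (Function.update t x v)
          = (∑ v ∈ Dfin x, ∏ F ∈ E.filter (fun F => x ∈ F), f F (Function.update t x v))
            * ∏ F ∈ E.filter (fun F => ¬ x ∈ F), f F t := by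
            rw [Finset.sum_mul]
            exact Finset.sum_congr rfl fun v _ => hsplitprod v
        _ ≤ (∏ F ∈ E.filter (fun F => x ∈ F),
              (∑ v ∈ Dfin x, f F (Function.update t x v) ^ (w F)⁻¹) ^ w F)
            * ∏ F ∈ E.filter (fun F => ¬ x ∈ F), f F t := by
            refine mul_le_mul_of_nonneg_right ?_ (Finset.prod_nonneg fun F hF =>
              hf0 F (Finset.mem_of_mem_filter F hF) t)
            calc ∑ v ∈ Dfin x, ∏ F ∈ E.filter (fun F => x ∈ F), f F (Function.update t x v)
                = ∑ v ∈ Dfin x, ∏ F ∈ E.filter (fun F => x ∈ F),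
                    (f F (Function.update t x v) ^ (w F)⁻¹) ^ w F :=
                  (Finset.sum_congr rfl hrw).symm
              _ ≤ _ := hhold
        _ = ∏ F ∈ E, f' F t := by
            rw [← Finset.prod_filter_mul_prod_filter_not E (fun F => x ∈ F)]
            congr 1
            · refine Finset.prod_congr rfl fun F hF => ?_
              rw [Finset.mem_filter] at hF
              rw [hf'def]
              simp only [hF.2, if_true]
            · refine Finset.prod_congr rfl fun F hF => ?_
              rw [Finset.mem_filter] at hF
              rw [hf'def]
              simp only [hF.2, if_false]
    -- Step D (identify the RHS factors)
    have erase_inter_of_not_mem : ∀ F : Finset V, x ∉ F → (S.erase x) ∩ F = S ∩ F := by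
      intro F hxF
      ext y
      simp only [Finset.mem_inter, Finset.mem_erase]
      constructor
      · rintro ⟨⟨_, hyS⟩, hyF⟩; exact ⟨hyS, hyF⟩
      · rintro ⟨hyS, hyF⟩; exact ⟨⟨fun h' => hxF (h' ▸ hyF), hyS⟩, hyF⟩
    have erase_inter_of_mem : ∀ F : Finset V, (S ∩ F).erase x = (S.erase x) ∩ F := by
      intro F
      ext y
      simp only [Finset.mem_inter, Finset.mem_erase]
      tauto
    have stepD : ∀ F ∈ E,
        (∑ s ∈ pbox Dfin t₀ ((S.erase x) ∩ F), f' F s ^ (w F)⁻¹) ^ w F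
          = (∑ s ∈ pbox Dfin t₀ (S ∩ F), f F s ^ (w F)⁻¹) ^ w F := by
      intro F hF
      by_cases hxF : x ∈ F
      · have hxSF : x ∈ S ∩ F := Finset.mem_inter.2 ⟨hx, hxF⟩
        congr 1
        rw [pbox_split Dfin t₀ (S ∩ F) hxSF (fun s => f F s ^ (w F)⁻¹),
          ← erase_inter_of_mem F, Finset.sum_comm]
        refine Finset.sum_congr rfl fun s _ => ?_
        rw [hf'def]
        simp only [hxF, if_true]
        rw [Real.rpow_rpow_inv (Finset.sum_nonneg fun v _ =>
          Real.rpow_nonneg (hf0 F hF _) _) (hw F hF).ne']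
      · rw [erase_inter_of_not_mem F hxF]
        congr 1
        refine Finset.sum_congr rfl fun s _ => ?_
        rw [hf'def]
        simp only [hxF, if_false]
    -- Assemble
    calc ∑ t ∈ pbox Dfin t₀ S, ∏ F ∈ E, f F t
        = ∑ t ∈ pbox Dfin t₀ (S.erase x), ∑ v ∈ Dfin x,
            ∏ F ∈ E, f F (Function.update t x v) := by
          rw [pbox_split Dfin t₀ S hx (fun t => ∏ F ∈ E, f F t), Finset.sum_comm]
      _ ≤ ∑ t ∈ pbox Dfin t₀ (S.erase x), ∏ F ∈ E, f' F t := Finset.sum_le_sum stepB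
      _ ≤ ∏ F ∈ E, (∑ s ∈ pbox Dfin t₀ ((S.erase x) ∩ F), f' F s ^ (w F)⁻¹) ^ w F :=
          ih (S.erase x) hcov' f' hf'0 hdep' hcard
      _ = ∏ F ∈ E, (∑ s ∈ pbox Dfin t₀ (S ∩ F), f F s ^ (w F)⁻¹) ^ w F :=
          Finset.prod_congr rfl stepD



/-- Let `H = (V, E)` be a hypergraph with a finite relation `R F` over each
hyperedge `F ∈ E`, let `Vb` be a proper subset of `V`, let `u` be a fractional edge cover
of `V`, and let `α` be its slack.  Then for every real `T > 0`, the set of tuples `a` over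
`Vb` such that the number of tuples `t` in the join `⋈_{F ∈ E} R_F` with `t[Vb] = a`
exceeds `T` is finite and has cardinality at most `(∏_{F ∈ E} |R F| ^ (u F)) / T ^ α`. -/
theorem stmt1 {V : Type*} [Fintype V] [DecidableEq V]
    (D : V → Type*)
    (E : Finset (Finset V))
    (hcover : ∀ x : V, ∃ F ∈ E, x ∈ F)
    (R : (F : Finset V) → Set ((x : F) → D x.1))
    (hRfin : ∀ F ∈ E, (R F).Finite)
    (Vb : Finset V) (hVb : Vb ≠ Finset.univ)
    (u : Finset V → ℝ)
    (hu0 : ∀ F ∈ E, 0 ≤ u F)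
    (hucov : ∀ x : V, 1 ≤ ∑ F ∈ E, if x ∈ F then u F else 0)
    (α : ℝ)
    (hα : IsLeast {s : ℝ | ∃ x : V, x ∉ Vb ∧ s = ∑ F ∈ E, if x ∈ F then u F else 0} α)
    (T : ℝ) (hT : 0 < T) :
    {a : (x : Vb) → D x.1 |
        T < (({t : (x : V) → D x |
            (∀ F ∈ E, (fun x : F => t x.1) ∈ R F) ∧
            (fun x : Vb => t x.1) = a}).ncard : ℝ)}.Finite ∧
    (({a : (x : Vb) → D x.1 |
        T < (({t : (x : V) → D x |
            (∀ F ∈ E, (fun x : F => t x.1) ∈ R F) ∧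
            (fun x : Vb => t x.1) = a}).ncard : ℝ)}).ncard : ℝ)
      ≤ (∏ F ∈ E, ((R F).ncard : ℝ) ^ (u F)) / T ^ α := by
  classical
  -- basic facts about α
  have hα1 : 1 ≤ α := by
    obtain ⟨x, hxVb, hxs⟩ := hα.1
    rw [hxs]
    exact hucov x
  have hα0 : 0 < α := lt_of_lt_of_le one_pos hα1
  have hαle : ∀ x : V, x ∉ Vb → α ≤ ∑ F ∈ E, if x ∈ F then u F else 0 :=
    fun x hx => hα.2 ⟨x, hx, rfl⟩
  have hTα : 0 < T ^ α := Real.rpow_pos_of_pos hT α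
  have hRHS0 : 0 ≤ (∏ F ∈ E, ((R F).ncard : ℝ) ^ (u F)) / T ^ α :=
    div_nonneg (Finset.prod_nonneg fun F _ => Real.rpow_nonneg (Nat.cast_nonneg _) _) hTα.le
  -- the heavy set
  set HS := {a : (x : Vb) → D x.1 |
      T < (({t : (x : V) → D x |
          (∀ F ∈ E, (fun x : F => t x.1) ∈ R F) ∧
          (fun x : Vb => t x.1) = a}).ncard : ℝ)} with hHS
  -- degenerate case: some empty domain
  by_cases hne : ∀ x : V, Nonempty (D x)
  swap
  · push_neg at hne
    obtain ⟨x, hxD⟩ := hne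
    have hempty : HS = ∅ := by
      rw [Set.eq_empty_iff_forall_notMem]
      intro a ha
      rw [hHS, Set.mem_setOf_eq] at ha
      have hpos : ({t : (x : V) → D x |
          (∀ F ∈ E, (fun x : F => t x.1) ∈ R F) ∧
          (fun x : Vb => t x.1) = a}).ncard ≠ 0 := by
        intro h0
        rw [h0] at ha
        norm_num at ha
        linarith
      obtain ⟨t, -⟩ := Set.nonempty_of_ncard_ne_zero hpos
      exact hxD.false (t x)
    rw [hempty]
    exact ⟨Set.finite_empty, by simpa using hRHS0⟩
  -- main case
  have t₀' : ∀ x : V, D x := fun x => Classical.arbitrary (D x)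
  -- only positive-weight edges matter
  set E' : Finset (Finset V) := E.filter (fun F => 0 < u F) with hE'
  have hE'sub : E' ⊆ E := Finset.filter_subset _ _
  have hupos : ∀ F ∈ E', 0 < u F := fun F hF => (Finset.mem_filter.1 hF).2
  have hsumE' : ∀ x : V, ∑ F ∈ E', (if x ∈ F then u F else 0)
      = ∑ F ∈ E, (if x ∈ F then u F else 0) := by
    intro x
    rw [hE', Finset.sum_filter]
    refine Finset.sum_congr rfl fun F hF => ?_
    by_cases h : 0 < u F
    · simp [h]
    · have : u F = 0 := le_antisymm (not_lt.1 h) (hu0 F hF)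
      simp [h, this]
  -- finite domains
  have hUfin : ∀ x : V, {d : D x | ∃ F ∈ E', ∃ (hxF : x ∈ F),
      ∃ b ∈ R F, b ⟨x, hxF⟩ = d}.Finite := by
    intro x
    have : {d : D x | ∃ F ∈ E', ∃ (hxF : x ∈ F), ∃ b ∈ R F, b ⟨x, hxF⟩ = d}
        ⊆ ⋃ F ∈ (E' : Set (Finset V)), ⋃ (hxF : x ∈ F), (fun b => b ⟨x, hxF⟩) '' (R F) := by
      rintro d ⟨F, hF, hxF, b, hb, rfl⟩
      exact Set.mem_biUnion hF (Set.mem_iUnion.2 ⟨hxF, Set.mem_image_of_mem _ hb⟩)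
    refine Set.Finite.subset ?_ this
    refine Set.Finite.biUnion E'.finite_toSet fun F hF => ?_
    exact Set.finite_iUnion fun hxF => (hRfin F (hE'sub hF)).image _
  set Dfin : ∀ x : V, Finset (D x) := fun x => (hUfin x).toFinset with hDfin
  have hmemDfin : ∀ (x : V) (F : Finset V), F ∈ E' → ∀ (hxF : x ∈ F),
      ∀ b ∈ R F, b ⟨x, hxF⟩ ∈ Dfin x := by
    intro x F hF hxF b hb
    rw [hDfin, Set.Finite.mem_toFinset]
    exact ⟨F, hF, hxF, b, hb, rfl⟩
  -- every variable is covered by a positive-weight edge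
  have hcov' : ∀ x : V, ∃ F ∈ E', x ∈ F := by
    intro x
    by_contra h
    push_neg at h
    have : ∑ F ∈ E', (if x ∈ F then u F else 0) = 0 :=
      Finset.sum_eq_zero fun F hF => by simp [h F hF]
    have h1 := hucov x
    rw [← hsumE' x, this] at h1
    linarith
  -- complement of bound variables
  set Sc : Finset V := Finset.univ \ Vb with hSc
  have hmemSc : ∀ x : V, x ∈ Sc ↔ x ∉ Vb := by
    intro x
    rw [hSc, Finset.mem_sdiff]
    simp
  -- the relations as finsets
  set Rfin : (F : Finset V) → Finset ((y : F) → D y.1) :=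
    fun F => if h : F ∈ E then (hRfin F h).toFinset else ∅ with hRfinDef
  have hmemRfin : ∀ F (hF : F ∈ E) b, b ∈ Rfin F ↔ b ∈ R F := by
    intro F hF b
    rw [hRfinDef]
    simp only [dif_pos hF, Set.Finite.mem_toFinset]
  -- degree counts
  set dcnt : Finset V → (∀ x, D x) → ℕ := fun F τ =>
    ((Rfin F).filter (fun b => ∀ y : F, y.1 ∈ Vb → b y = τ y.1)).card with hdcnt
  -- extension of bound tuples
  set exta : ((y : Vb) → D y.1) → (∀ x, D x) :=
    fun a x => if hxv : x ∈ Vb then a ⟨x, hxv⟩ else t₀' x with hexta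
  -- residual join tuples
  set Ft : ((y : Vb) → D y.1) → Finset (∀ x, D x) := fun a =>
    (pbox Dfin (exta a) Sc).filter (fun t => ∀ F ∈ E', (fun y : F => t y.1) ∈ R F) with hFt
  set abox : Finset ((y : Vb) → D y.1) := Fintype.piFinset (fun y : Vb => Dfin y.1) with habox
  set Af := abox.filter (fun a => T < ((Ft a).card : ℝ)) with hAf
  -- bridge 1 : counting residual tuples inside a box equals degree count
  have bridge1 : ∀ F, F ∈ E' → ∀ τ : ∀ x, D x,
      ((pbox Dfin τ (Sc ∩ F)).filter (fun s => (fun y : F => s y.1) ∈ R F)).card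
        = dcnt F τ := by
    intro F hF τ
    simp only [hdcnt]
    refine Finset.card_nbij' (fun s => (fun y : F => s y.1))
      (fun b => fun x => if hxF : x ∈ F then (if x ∈ Sc then b ⟨x, hxF⟩ else τ x) else τ x)
      ?_ ?_ ?_ ?_
    · intro s hs
      rw [Finset.mem_coe, Finset.mem_filter] at hs
      obtain ⟨hs1, hs2⟩ := hs
      rw [mem_pbox] at hs1
      rw [Finset.mem_coe, Finset.mem_filter]
      refine ⟨(hmemRfin F (hE'sub hF) _).2 hs2, fun y hyVb => ?_⟩
      refine hs1.2 y.1 fun hy => ?_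
      rw [Finset.mem_inter, hmemSc] at hy
      exact hy.1 hyVb
    · intro b hb
      rw [Finset.mem_coe, Finset.mem_filter] at hb
      obtain ⟨hb1, hb2⟩ := hb
      rw [hmemRfin F (hE'sub hF)] at hb1
      have hres : (fun y : F =>
          (fun x => if hxF : x ∈ F then (if x ∈ Sc then b ⟨x, hxF⟩ else τ x) else τ x) y.1) = b := by
        funext y
        simp only [dif_pos y.2]
        by_cases hySc : y.1 ∈ Sc
        · rw [if_pos hySc]
        · rw [if_neg hySc]
          have hyVb : y.1 ∈ Vb := not_not.1 (fun h => hySc ((hmemSc y.1).2 h))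
          exact (hb2 y hyVb).symm
      rw [Finset.mem_coe, Finset.mem_filter]
      constructor
      · rw [mem_pbox]
        constructor
        · intro y hy
          rw [Finset.mem_inter] at hy
          simp only [dif_pos hy.2, if_pos hy.1]
          exact hmemDfin y F hF hy.2 b hb1
        · intro y hy
          rw [Finset.mem_inter] at hy
          by_cases hyF : y ∈ F
          · have hySc : y ∉ Sc := fun h => hy ⟨h, hyF⟩
            simp only [dif_pos hyF, if_neg hySc]
          · simp only [dif_neg hyF]
      · rw [hres]
        exact hb1
    · intro s hs
      rw [Finset.mem_coe, Finset.mem_filter] at hs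
      obtain ⟨hs1, -⟩ := hs
      rw [mem_pbox] at hs1
      funext x
      by_cases hxF : x ∈ F
      · simp only [dif_pos hxF]
        by_cases hxSc : x ∈ Sc
        · rw [if_pos hxSc]
        · rw [if_neg hxSc]
          exact (hs1.2 x fun h => hxSc (Finset.mem_inter.1 h).1).symm
      · simp only [dif_neg hxF]
        exact (hs1.2 x fun h => hxF (Finset.mem_inter.1 h).2).symm
    · intro b hb
      rw [Finset.mem_coe, Finset.mem_filter] at hb
      obtain ⟨hb1, hb2⟩ := hb
      funext y
      simp only [dif_pos y.2]
      by_cases hySc : y.1 ∈ Sc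
      · rw [if_pos hySc]
      · rw [if_neg hySc]
        have hyVb : y.1 ∈ Vb := not_not.1 (fun h => hySc ((hmemSc y.1).2 h))
        exact (hb2 y hyVb).symm
  -- bridge 2 : degrees sum to the relation size
  have bridge2 : ∀ F, F ∈ E' →
      ∑ s ∈ pbox Dfin t₀' (Vb ∩ F), (dcnt F s : ℝ) = ((Rfin F).card : ℝ) := by
    intro F hF
    rw [← Nat.cast_sum]
    congr 1
    symm
    have hmaps : ∀ b ∈ Rfin F,
        (fun x => if hxF : x ∈ F then (if x ∈ Vb then b ⟨x, hxF⟩ else t₀' x) else t₀' x)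
          ∈ pbox Dfin t₀' (Vb ∩ F) := by
      intro b hb
      rw [hmemRfin F (hE'sub hF)] at hb
      rw [mem_pbox]
      constructor
      · intro y hy
        rw [Finset.mem_inter] at hy
        simp only [dif_pos hy.2, if_pos hy.1]
        exact hmemDfin y F hF hy.2 b hb
      · intro y hy
        rw [Finset.mem_inter] at hy
        by_cases hyF : y ∈ F
        · have hyVb : y ∉ Vb := fun h => hy ⟨h, hyF⟩
          simp only [dif_pos hyF, if_neg hyVb]
        · simp only [dif_neg hyF]
    rw [Finset.card_eq_sum_card_fiberwise hmaps]
    refine Finset.sum_congr rfl fun s hs => ?_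
    simp only [hdcnt]
    congr 1
    refine Finset.filter_congr fun b hb => ?_
    rw [mem_pbox] at hs
    constructor
    · intro h y hyVb
      have := congrFun h y.1
      simp only [dif_pos y.2, if_pos hyVb] at this
      rw [← this]
    · intro h
      funext x
      by_cases hxF : x ∈ F
      · simp only [dif_pos hxF]
        by_cases hxVb : x ∈ Vb
        · rw [if_pos hxVb]
          exact h ⟨x, hxF⟩ hxVb
        · rw [if_neg hxVb]
          exact (hs.2 x fun hm => hxVb (Finset.mem_inter.1 hm).1).symm
      · simp only [dif_neg hxF]
        exact (hs.2 x fun hm => hxF (Finset.mem_inter.1 hm).2).symm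
  -- Step 1 : per-tuple AGM bound via Finner
  have step1 : ∀ a : (y : Vb) → D y.1,
      (((Ft a).card : ℝ)) ^ α ≤ ∏ F ∈ E', ((dcnt F (exta a) : ℝ)) ^ u F := by
    intro a
    have hcovSc : ∀ x ∈ Sc, (1:ℝ) ≤ ∑ F ∈ E', (if x ∈ F then u F / α else 0) := by
      intro x hx
      have h1 : ∑ F ∈ E', (if x ∈ F then u F / α else 0)
          = (∑ F ∈ E', (if x ∈ F then u F else 0)) / α := by
        rw [Finset.sum_div]
        exact Finset.sum_congr rfl fun F _ => by split_ifs <;> simp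
      rw [h1, le_div_iff₀ hα0, one_mul]
      rw [hsumE' x]
      exact hαle x ((hmemSc x).1 hx)
    have hfin := finner Dfin (exta a) E' (fun F => u F / α)
      (fun F hF => div_pos (hupos F hF) hα0) Sc hcovSc
      (fun F t => if (fun y : F => t y.1) ∈ R F then (1:ℝ) else 0)
      (fun F hF t => by split_ifs <;> norm_num)
      (fun F hF t t' hag => by
        have h : (fun y : F => t y.1) = (fun y : F => t' y.1) :=
          funext fun y => hag y.1 y.2
        rw [h])
    have hLHS : ∑ t ∈ pbox Dfin (exta a) Sc, ∏ F ∈ E',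
        (if (fun y : F => t y.1) ∈ R F then (1:ℝ) else 0) = ((Ft a).card : ℝ) := by
      simp only [hFt]
      rw [← Finset.sum_boole]
      refine Finset.sum_congr rfl fun t _ => ?_
      by_cases h : ∀ F ∈ E', (fun y : F => t y.1) ∈ R F
      · rw [if_pos h]
        exact Finset.prod_eq_one fun F hF => if_pos (h F hF)
      · rw [if_neg h]
        push_neg at h
        obtain ⟨F, hF, hnF⟩ := h
        exact Finset.prod_eq_zero hF (if_neg hnF)
    have hfac : ∀ F ∈ E',
        (∑ s ∈ pbox Dfin (exta a) (Sc ∩ F),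
          (if (fun y : F => s y.1) ∈ R F then (1:ℝ) else 0) ^ (u F / α)⁻¹)
          = (dcnt F (exta a) : ℝ) := by
      intro F hF
      have hps : ∀ s : ∀ x, D x, (if (fun y : F => s y.1) ∈ R F then (1:ℝ) else 0) ^ (u F / α)⁻¹
          = (if (fun y : F => s y.1) ∈ R F then (1:ℝ) else 0) := by
        intro s
        split_ifs
        · exact Real.one_rpow _
        · exact Real.zero_rpow (inv_ne_zero (div_pos (hupos F hF) hα0).ne')
      rw [Finset.sum_congr rfl fun s _ => hps s, Finset.sum_boole, bridge1 F hF (exta a)]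
    have hmain : ((Ft a).card : ℝ) ≤ ∏ F ∈ E', (dcnt F (exta a) : ℝ) ^ (u F / α) := by
      rw [← hLHS]
      refine le_trans hfin (le_of_eq (Finset.prod_congr rfl fun F hF => ?_))
      rw [hfac F hF]
    calc ((Ft a).card : ℝ) ^ α
        ≤ (∏ F ∈ E', (dcnt F (exta a) : ℝ) ^ (u F / α)) ^ α :=
          Real.rpow_le_rpow (Nat.cast_nonneg _) hmain hα0.le
      _ = ∏ F ∈ E', (dcnt F (exta a) : ℝ) ^ u F := by
          rw [← Real.finset_prod_rpow E' _
            (fun F hF => Real.rpow_nonneg (Nat.cast_nonneg _) _) α]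
          refine Finset.prod_congr rfl fun F hF => ?_
          rw [← Real.rpow_mul (Nat.cast_nonneg _), div_mul_cancel₀ _ hα0.ne']
  -- Step 2 : summing the degree products over the bound variables
  have step2 : ∑ τ ∈ pbox Dfin t₀' Vb, ∏ F ∈ E', (dcnt F τ : ℝ) ^ u F
      ≤ ∏ F ∈ E', ((Rfin F).card : ℝ) ^ u F := by
    have hcovVb : ∀ x ∈ Vb, (1:ℝ) ≤ ∑ F ∈ E', (if x ∈ F then u F else 0) := by
      intro x _
      rw [hsumE' x]
      exact hucov x
    have hdepd : ∀ F ∈ E', ∀ t t', (∀ y ∈ F, t y = t' y) →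
        ((dcnt F t : ℝ) ^ u F) = ((dcnt F t' : ℝ) ^ u F) := by
      intro F hF t t' hag
      have : dcnt F t = dcnt F t' := by
        simp only [hdcnt]
        congr 1
        refine Finset.filter_congr fun b hb => ?_
        constructor
        · intro h y hy
          rw [h y hy, hag y.1 y.2]
        · intro h y hy
          rw [h y hy, ← hag y.1 y.2]
      rw [this]
    have hfin := finner Dfin t₀' E' u hupos Vb hcovVb
      (fun F τ => (dcnt F τ : ℝ) ^ u F)
      (fun F hF τ => Real.rpow_nonneg (Nat.cast_nonneg _) _) hdepd
    refine le_trans hfin (le_of_eq (Finset.prod_congr rfl fun F hF => ?_))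
    congr 1
    rw [← bridge2 F hF]
    refine Finset.sum_congr rfl fun s _ => ?_
    exact Real.rpow_rpow_inv (Nat.cast_nonneg _) (hupos F hF).ne'
  -- linking the heavy tuples with the box over the bound variables
  have hmono : ∀ a ∈ Af, exta a ∈ pbox Dfin t₀' Vb := by
    intro a ha
    rw [hAf, Finset.mem_filter, habox, Fintype.mem_piFinset] at ha
    rw [mem_pbox]
    constructor
    · intro y hy
      rw [hexta]
      simp only [dif_pos hy]
      exact ha.1 ⟨y, hy⟩
    · intro y hy
      rw [hexta]
      simp only [dif_neg hy]
  have hinj : Set.InjOn exta ↑Af := by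
    intro a1 _ a2 _ h
    funext y
    have := congrFun h y.1
    rw [hexta] at this
    simpa only [dif_pos y.2] using this
  have hsum_img : ∑ a ∈ Af, ∏ F ∈ E', (dcnt F (exta a) : ℝ) ^ u F
      ≤ ∑ τ ∈ pbox Dfin t₀' Vb, ∏ F ∈ E', (dcnt F τ : ℝ) ^ u F := by
    have himg : ∑ τ ∈ Af.image exta, ∏ F ∈ E', (dcnt F τ : ℝ) ^ u F
        = ∑ a ∈ Af, ∏ F ∈ E', (dcnt F (exta a) : ℝ) ^ u F :=
      Finset.sum_image (fun a ha b hb h =>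
        hinj (Finset.mem_coe.2 ha) (Finset.mem_coe.2 hb) h)
    rw [← himg]
    refine Finset.sum_le_sum_of_subset_of_nonneg ?_
      (fun τ _ _ => Finset.prod_nonneg fun F _ => Real.rpow_nonneg (Nat.cast_nonneg _) _)
    intro τ hτ
    rw [Finset.mem_image] at hτ
    obtain ⟨a, ha, rfl⟩ := hτ
    exact hmono a ha
  -- the global count
  have hcount : (Af.card : ℝ) * T ^ α ≤ ∏ F ∈ E', ((Rfin F).card : ℝ) ^ u F := by
    have hTle : ∀ a ∈ Af, T ^ α ≤ ((Ft a).card : ℝ) ^ α := by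
      intro a ha
      rw [hAf, Finset.mem_filter] at ha
      exact Real.rpow_le_rpow hT.le ha.2.le hα0.le
    calc (Af.card : ℝ) * T ^ α = Af.card • (T ^ α) := by rw [nsmul_eq_mul]
      _ ≤ ∑ a ∈ Af, ((Ft a).card : ℝ) ^ α := Finset.card_nsmul_le_sum Af _ _ hTle
      _ ≤ ∑ a ∈ Af, ∏ F ∈ E', (dcnt F (exta a) : ℝ) ^ u F :=
          Finset.sum_le_sum fun a _ => step1 a
      _ ≤ ∑ τ ∈ pbox Dfin t₀' Vb, ∏ F ∈ E', (dcnt F τ : ℝ) ^ u F := hsum_img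
      _ ≤ ∏ F ∈ E', ((Rfin F).card : ℝ) ^ u F := step2
  -- converting the product over E' to the product over E
  have hprod : ∏ F ∈ E', ((Rfin F).card : ℝ) ^ u F
      = ∏ F ∈ E, ((R F).ncard : ℝ) ^ u F := by
    rw [← Finset.prod_filter_mul_prod_filter_not E (fun F => 0 < u F)
      (fun F => ((R F).ncard : ℝ) ^ u F)]
    have h2 : ∏ F ∈ E.filter (fun F => ¬ 0 < u F), ((R F).ncard : ℝ) ^ u F = 1 := by
      refine Finset.prod_eq_one fun F hF => ?_
      rw [Finset.mem_filter] at hF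
      have hz : u F = 0 := le_antisymm (not_lt.1 hF.2) (hu0 F hF.1)
      rw [hz, Real.rpow_zero]
    rw [h2, mul_one]
    refine Finset.prod_congr rfl fun F hF => ?_
    have hFE : F ∈ E := hE'sub hF
    congr 2
    rw [hRfinDef]
    simp only [dif_pos hFE]
    exact ((Set.ncard_eq_toFinset_card (R F) (hRfin F hFE))).symm
  -- the heavy set is contained in Af
  have hHSsub : HS ⊆ ↑Af := by
    intro a ha
    rw [hHS, Set.mem_setOf_eq] at ha
    have hsub : {t : (x : V) → D x | (∀ F ∈ E, (fun x : F => t x.1) ∈ R F) ∧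
        (fun x : Vb => t x.1) = a} ⊆ ↑(Ft a) := by
      rintro t ⟨ht1, ht2⟩
      rw [Finset.mem_coe, hFt, Finset.mem_filter]
      constructor
      · rw [mem_pbox]
        constructor
        · intro y _
          obtain ⟨F, hF, hyF⟩ := hcov' y
          exact hmemDfin y F hF hyF _ (ht1 F (hE'sub hF))
        · intro y hy
          have hyVb : y ∈ Vb := not_not.1 (fun h => hy ((hmemSc y).2 h))
          rw [hexta]
          simp only [dif_pos hyVb]
          exact (congrFun ht2 ⟨y, hyVb⟩ : t y = a ⟨y, hyVb⟩)
      · intro F hF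
        exact ht1 F (hE'sub hF)
    have hle : ({t : (x : V) → D x | (∀ F ∈ E, (fun x : F => t x.1) ∈ R F) ∧
        (fun x : Vb => t x.1) = a}).ncard ≤ (Ft a).card := by
      have := Set.ncard_le_ncard hsub (Ft a).finite_toSet
      rwa [Set.ncard_coe_finset] at this
    have haT : T < ((Ft a).card : ℝ) := lt_of_lt_of_le ha (by exact_mod_cast hle)
    have hnon : ({t : (x : V) → D x | (∀ F ∈ E, (fun x : F => t x.1) ∈ R F) ∧
        (fun x : Vb => t x.1) = a}).Nonempty := by
      refine Set.nonempty_of_ncard_ne_zero fun h0 => ?_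
      rw [h0] at ha
      norm_num at ha
      linarith
    obtain ⟨t, ht1, ht2⟩ := hnon
    have haabox : a ∈ abox := by
      rw [habox, Fintype.mem_piFinset]
      intro y
      obtain ⟨F, hF, hyF⟩ := hcov' y.1
      have hmem := hmemDfin y.1 F hF hyF _ (ht1 F (hE'sub hF))
      have : t y.1 = a y := congrFun ht2 y
      rwa [this] at hmem
    exact Finset.mem_coe.2 (Finset.mem_filter.2 ⟨haabox, haT⟩)
  -- conclusion
  refine ⟨Set.Finite.subset Af.finite_toSet hHSsub, ?_⟩
  have h1 : (HS.ncard : ℝ) ≤ (Af.card : ℝ) := by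
    have := Set.ncard_le_ncard hHSsub Af.finite_toSet
    rw [Set.ncard_coe_finset] at this
    exact_mod_cast this
  rw [le_div_iff₀ hTα]
  calc (HS.ncard : ℝ) * T ^ α ≤ (Af.card : ℝ) * T ^ α :=
        mul_le_mul_of_nonneg_right h1 hTα.le
    _ ≤ ∏ F ∈ E', ((Rfin F).card : ℝ) ^ u F := hcount
    _ = ∏ F ∈ E, ((R F).ncard : ℝ) ^ u F := hprod
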